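/- If Z, w are complex numbers with |w| = 1 and |Z − w| < √3/2, then Z ≠ 0 and the angular distance between arg Z and arg w is less than π/3, i.e., there exists an integer k with |arg Z − arg w + 2πk| < π/3. -/

import Mathlib

open Real Complex

lemma arg_abs_lt_of_close_to_one (u : ℂ) (h : ‖(u - 1)‖ < Real.sqrt 3 / 2) :
    |Complex.arg u| < π / 3 := by
  have hs3 : Real.sqrt 3 < 2 := by
    nlinarith [Real.sq_sqrt (by norm_num : (3:ℝ) ≥ 0), Real.sqrt_nonneg 3]
  have h2 : (‖(u - 1)‖)^2 < 3/4 := by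
    nlinarith [norm_nonneg (u - 1), Real.sq_sqrt (by norm_num : (3:ℝ) ≥ 0),
      Real.sqrt_nonneg 3]
  have hre : (u.re - 1)^2 + u.im^2 < 3/4 := by
    have := Complex.sq_norm (u - 1)
    rw [Complex.normSq_apply] at this
    simp only [Complex.sub_re, Complex.sub_im, Complex.one_re, Complex.one_im, sub_zero] at this
    nlinarith
  have hrepos : 0 < u.re := by nlinarith
  have hu : u ≠ 0 := by
    intro h0; rw [h0] at hrepos; simp at hrepos
  have habs : 0 < ‖u‖ := norm_pos_iff.mpr hu
  have hsq : (‖u‖)^2 = u.re^2 + u.im^2 := by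
    rw [Complex.sq_norm, Complex.normSq_apply]; ring
  have h2re : ‖u‖ < 2 * u.re := by
    have hsq2 : (‖u‖)^2 < (2 * u.re)^2 := by
      nlinarith [sq_nonneg (2 * u.re - 1/2)]
    exact lt_of_pow_lt_pow_left₀ 2 (by linarith) hsq2
  have hcos : 1/2 < Real.cos (Complex.arg u) := by
    rw [Complex.cos_arg hu, lt_div_iff₀ habs]; nlinarith
  by_contra hc
  push_neg at hc
  have h2' : |Complex.arg u| ≤ π := Complex.abs_arg_le_pi u
  have hmono : Real.cos |Complex.arg u| ≤ Real.cos (π/3) :=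
    Real.cos_le_cos_of_nonneg_of_le_pi (by positivity) h2' hc
  rw [Real.cos_abs, Real.cos_pi_div_three] at hmono
  linarith

/-- Key geometric lemma of robust phase estimation.  `arg2` is a fixed choice of
argument in `[0, 2π)`.  If `|w| = 1` and `|Z − w| < √3/2`, then `Z ≠ 0` and the
angular distance between `arg2 Z` and `arg2 w` is less than `π/3`. -/
theorem arg_close_of_close_to_circle
    (arg2 : ℂ → ℝ)
    (harg2 : ∀ z : ℂ, z ≠ 0 → 0 ≤ arg2 z ∧ arg2 z < 2 * π ∧
      z = (‖z‖ : ℂ) * Complex.exp (Complex.I * (arg2 z)))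
    (Z w : ℂ) (hw : ‖w‖ = 1) (hZw : ‖(Z - w)‖ < Real.sqrt 3 / 2) :
    Z ≠ 0 ∧ ∃ k : ℤ, |arg2 Z - arg2 w + 2 * π * k| < π / 3 := by
  have hs3 : Real.sqrt 3 < 2 := by
    nlinarith [Real.sq_sqrt (by norm_num : (3:ℝ) ≥ 0), Real.sqrt_nonneg 3]
  have hw0 : w ≠ 0 := by
    intro h0; rw [h0] at hw; simp at hw
  have habsZ : 0 < ‖Z‖ := by
    have h1 : |‖Z‖ - ‖w‖| ≤ ‖Z - w‖ := abs_norm_sub_norm_le Z w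
    rw [hw] at h1
    have := abs_le.mp h1
    linarith [this.1]
  have hZ0 : Z ≠ 0 := by
    intro h0; rw [h0] at habsZ; simp at habsZ
  refine ⟨hZ0, ?_⟩
  set u : ℂ := Z / w with hu_def
  have hu0 : u ≠ 0 := div_ne_zero hZ0 hw0
  obtain ⟨_, _, hZeq⟩ := harg2 Z hZ0
  obtain ⟨_, _, hweq⟩ := harg2 w hw0
  set a := arg2 Z
  set b := arg2 w
  -- u = |Z| * exp(I*(a-b))
  have hueq : u = (‖Z‖ : ℂ) * Complex.exp (Complex.I * (a - b)) := by
    rw [hu_def]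
    conv_lhs => rw [hZeq, hweq, hw]
    push_cast
    rw [mul_sub, Complex.exp_sub]
    field_simp
  -- |u| = |Z|
  have habsu : ‖u‖ = ‖Z‖ := by
    rw [hu_def, norm_div, hw, div_one]
  -- u = |u| exp(arg u * I)
  have hu2 : u = (‖Z‖ : ℂ) * Complex.exp ((Complex.arg u : ℂ) * Complex.I) := by
    rw [← habsu]; exact (Complex.norm_mul_exp_arg_mul_I u).symm
  have hZne : (‖Z‖ : ℂ) ≠ 0 :=
    Complex.ofReal_ne_zero.mpr (ne_of_gt habsZ)
  have hexp : Complex.exp (Complex.I * ((a : ℂ) - b)) =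
      Complex.exp ((Complex.arg u : ℂ) * Complex.I) := by
    have := hueq.symm.trans hu2
    exact mul_left_cancel₀ hZne this
  obtain ⟨n, hn⟩ := Complex.exp_eq_exp_iff_exists_int.mp hexp
  have him : a - b = Complex.arg u + n * (2 * π) := by
    have := congrArg Complex.im hn
    simpa using this
  refine ⟨-n, ?_⟩
  have : a - b + 2 * π * (-n : ℤ) = Complex.arg u := by
    push_cast
    rw [him]; ring
  rw [this]
  -- geometric part
  have hdist : ‖(u - 1)‖ < Real.sqrt 3 / 2 := by
    have : u - 1 = (Z - w) / w := by
      rw [hu_def]; field_simp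
    rw [this, norm_div, hw, div_one]
    exact hZw
  exact arg_abs_lt_of_close_to_one u hdist
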